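/- Let h(t) = t·(1 − √(1−2t))^2 / (2·(1−2t)^{3/2}) and let f : ℝ → ℝ be given by f(t) = h(t)^2/(2·√(1−2t)) + t·h(t)·(1 − √(1−2t))/(1−2t)^2 for t < 1/2. Then the sequence n ↦ f^{(n)}(0) of iterated derivatives of f at 0 is asymptotically equivalent, as n → ∞, to the sequence n ↦ (1/(3√π))·n^{5/2}·2^{n−2}·n!. (The quantity f^{(n)}(0) equals the number e¹_{n,2} of leaf-labeled simplex time-consistent galled trees with n leaves and exactly two galls.) -/

import Mathlib

/-- `h(t) = 𝔈₁¹(t) = t·(1 − √(1−2t))² / (2·(1−2t)^{3/2})`. -/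
noncomputable def h15 : ℝ → ℝ := fun t =>
  t * (1 - Real.sqrt (1 - 2 * t)) ^ 2 / (2 * (1 - 2 * t) ^ ((3 : ℝ) / 2))

/-- `f(t) = 𝔈₂¹(t) = h(t)²/(2·√(1−2t)) + t·h(t)·(1 − √(1−2t))/(1−2t)²`. -/
noncomputable def f15 : ℝ → ℝ := fun t =>
  h15 t ^ 2 / (2 * Real.sqrt (1 - 2 * t))
    + t * h15 t * (1 - Real.sqrt (1 - 2 * t)) / (1 - 2 * t) ^ 2

open Filter Finset Real Topology

namespace Stmt15

/-- coefficients of the partial-fraction-type decomposition of `f15` -/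
noncomputable def c : ℕ → ℝ
  | 0 => 5/32
  | 1 => -(1/2)
  | 2 => 1/4
  | 3 => 3/4
  | 4 => -(15/16)
  | 5 => 1/2
  | 6 => -(1/4)
  | _ => 1/32

/-- exponents of the decomposition -/
noncomputable def e : ℕ → ℝ
  | 0 => -(7/2)
  | 1 => -3
  | 2 => -(5/2)
  | 3 => -2
  | 4 => -(3/2)
  | 5 => -(1/2)
  | 6 => 0
  | _ => 1/2

noncomputable def g : ℝ → ℝ := fun t => ∑ k ∈ Finset.range 8, c k * (1 - 2*t) ^ (e k)

lemma rpow_half_int {x : ℝ} (hx : 0 < x) (m : ℤ) :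
    x ^ ((m : ℝ)/2) = (Real.sqrt x) ^ m := by
  rw [show ((m:ℝ)/2) = 1/2 * (m:ℝ) by ring, Real.rpow_mul hx.le, ← Real.sqrt_eq_rpow,
    Real.rpow_intCast]

lemma f15_eq_g {t : ℝ} (ht : t < 1/2) : f15 t = g t := by
  have h1 : (0:ℝ) < 1 - 2*t := by linarith
  have hsp : 0 < Real.sqrt (1 - 2*t) := Real.sqrt_pos.mpr h1
  have hs2 : Real.sqrt (1 - 2*t) ^ 2 = 1 - 2*t := Real.sq_sqrt h1.le
  have E : ∀ m : ℤ, (1 - 2*t) ^ ((m : ℝ)/2) = (Real.sqrt (1 - 2*t)) ^ m :=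
    fun m => rpow_half_int h1 m
  have E3 : (1 - 2*t) ^ ((3:ℝ)/2) = (Real.sqrt (1 - 2*t)) ^ (3:ℕ) := by
    have := E 3; push_cast at this; rw [this]; norm_cast
  simp only [f15, h15, g, Finset.sum_range_succ, Finset.sum_range_zero, zero_add]
  have c0 : c 0 = 5/32 := rfl
  have c1 : c 1 = -(1/2) := rfl
  have c2 : c 2 = 1/4 := rfl
  have c3 : c 3 = 3/4 := rfl
  have c4 : c 4 = -(15/16) := rfl
  have c5 : c 5 = 1/2 := rfl
  have c6 : c 6 = -(1/4) := rfl
  have c7 : c 7 = 1/32 := rfl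
  have e0 : e 0 = ((-7 : ℤ) : ℝ)/2 := by norm_num [e]
  have e1 : e 1 = ((-6 : ℤ) : ℝ)/2 := by norm_num [e]
  have e2 : e 2 = ((-5 : ℤ) : ℝ)/2 := by norm_num [e]
  have e3 : e 3 = ((-4 : ℤ) : ℝ)/2 := by norm_num [e]
  have e4 : e 4 = ((-3 : ℤ) : ℝ)/2 := by norm_num [e]
  have e5 : e 5 = ((-1 : ℤ) : ℝ)/2 := by norm_num [e]
  have e6 : e 6 = ((0 : ℤ) : ℝ)/2 := by norm_num [e]
  have e7 : e 7 = ((1 : ℤ) : ℝ)/2 := by norm_num [e]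
  rw [c0, c1, c2, c3, c4, c5, c6, c7, e0, e1, e2, e3, e4, e5, e6, e7,
    E (-7), E (-6), E (-5), E (-4), E (-3), E (-1), E 0, E 1, E3]
  set s := Real.sqrt (1 - 2*t) with hsdef
  have ht' : t = (1 - s^2)/2 := by rw [hs2]; ring
  rw [ht']
  have hs0 : s ≠ 0 := ne_of_gt hsp
  simp only [zpow_neg, zpow_natCast, zpow_ofNat, zpow_zero, zpow_one]
  field_simp
  ring

lemma hasDerivAt_term (co r : ℝ) {x : ℝ} (hx : x < 1/2) :
    HasDerivAt (fun y => co * (1 - 2*y) ^ r) (co * ((-2) * r * (1 - 2*x) ^ (r - 1))) x := by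
  have h1 : (0:ℝ) < 1 - 2*x := by linarith
  have hd : HasDerivAt (fun y : ℝ => 1 - 2*y) (-2) x := by
    simpa using ((hasDerivAt_id x).const_mul (2:ℝ)).const_sub 1
  exact (hd.rpow_const (Or.inl h1.ne')).const_mul co

lemma iteratedDeriv_g (n : ℕ) :
    ∀ t : ℝ, t < 1/2 → iteratedDeriv n g t
      = ∑ k ∈ Finset.range 8,
          c k * (∏ i ∈ Finset.range n, ((-2:ℝ) * (e k - i))) * (1 - 2*t) ^ (e k - n) := by
  induction n with
  | zero =>
    intro t ht
    simp [g, iteratedDeriv_zero]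
  | succ n ih =>
    intro t ht
    rw [iteratedDeriv_succ]
    have hev : iteratedDeriv n g =ᶠ[𝓝 t]
        (fun x => ∑ k ∈ Finset.range 8,
          c k * (∏ i ∈ Finset.range n, ((-2:ℝ) * (e k - i))) * (1 - 2*x) ^ (e k - n)) := by
      filter_upwards [isOpen_Iio.mem_nhds (show t ∈ Set.Iio (1/2:ℝ) from ht)] with x hx
      exact ih x hx
    rw [hev.deriv_eq]
    have hD : HasDerivAt
        (fun x => ∑ k ∈ Finset.range 8,
          c k * (∏ i ∈ Finset.range n, ((-2:ℝ) * (e k - i))) * (1 - 2*x) ^ (e k - n))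
        (∑ k ∈ Finset.range 8,
          (c k * (∏ i ∈ Finset.range n, ((-2:ℝ) * (e k - i)))) *
            ((-2) * (e k - n) * (1 - 2*t) ^ (e k - n - 1))) t :=
      HasDerivAt.fun_sum fun k _ =>
        hasDerivAt_term (c k * ∏ i ∈ Finset.range n, ((-2:ℝ) * (e k - i))) (e k - n) ht
    rw [hD.deriv]
    refine Finset.sum_congr rfl fun k _ => ?_
    rw [Finset.prod_range_succ]
    push_cast
    rw [show e k - ((n:ℝ) + 1) = e k - n - 1 by ring]
    ring

lemma iteratedDeriv_f15_zero (n : ℕ) :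
    iteratedDeriv n f15 0
      = ∑ k ∈ Finset.range 8, c k * ∏ i ∈ Finset.range n, ((-2:ℝ) * (e k - i)) := by
  have hev : f15 =ᶠ[𝓝 (0:ℝ)] g := by
    filter_upwards [isOpen_Iio.mem_nhds (show (0:ℝ) ∈ Set.Iio (1/2:ℝ) by norm_num)] with x hx
    exact f15_eq_g hx
  rw [hev.iteratedDeriv_eq n, iteratedDeriv_g n 0 (by norm_num)]
  refine Finset.sum_congr rfl fun k _ => ?_
  norm_num

lemma prod_eq_two_pow (r : ℝ) (n : ℕ) :
    (∏ i ∈ Finset.range n, ((-2:ℝ) * (r - i)))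
      = 2^n * ∏ i ∈ Finset.range n, ((i:ℝ) - r) := by
  have h1 : (∏ i ∈ Finset.range n, ((-2:ℝ) * (r - i)))
      = ∏ i ∈ Finset.range n, (2 * ((i:ℝ) - r)) :=
    Finset.prod_congr rfl fun i _ => by ring
  rw [h1, Finset.prod_mul_distrib, Finset.prod_const, Finset.card_range]

lemma prod_add_three (n : ℕ) :
    (∏ i ∈ Finset.range n, ((i:ℝ) + 3)) = ((n+2).factorial : ℝ) / 2 := by
  induction n with
  | zero => norm_num
  | succ n ih =>
    have hf : (n + 1 + 2).factorial = (n + 3) * (n + 2).factorial := by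
      rw [show n + 1 + 2 = (n + 2) + 1 by omega, Nat.factorial_succ]
    rw [Finset.prod_range_succ, ih, hf]
    push_cast
    ring

lemma gamma_seven_halves : Real.Gamma (7/2) = 15/8 * Real.sqrt π := by
  have h1 : Real.Gamma (1/2) = Real.sqrt π := Real.Gamma_one_half_eq
  have h3 : Real.Gamma (3/2) = 1/2 * Real.sqrt π := by
    rw [show (3/2:ℝ) = 1/2 + 1 by norm_num, Real.Gamma_add_one (by norm_num), h1]
  have h5 : Real.Gamma (5/2) = 3/4 * Real.sqrt π := by
    rw [show (5/2:ℝ) = 3/2 + 1 by norm_num, Real.Gamma_add_one (by norm_num), h3]; ring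
  rw [show (7/2:ℝ) = 5/2 + 1 by norm_num, Real.Gamma_add_one (by norm_num), h5]; ring

lemma tendsto_main :
    Tendsto (fun n : ℕ => (∏ i ∈ Finset.range n, ((i:ℝ) + 7/2))
      / ((n:ℝ) ^ ((5:ℝ)/2) * n.factorial)) atTop (𝓝 (8/(15 * Real.sqrt π))) := by
  have hsp : (0:ℝ) < Real.sqrt π := Real.sqrt_pos.mpr Real.pi_pos
  have hΓ : Real.Gamma (7/2) ≠ 0 := by
    rw [gamma_seven_halves]; positivity
  have hlim : Tendsto (fun n : ℕ => ((n:ℝ)/((n:ℝ) + 7/2)) / Real.GammaSeq (7/2) n)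
      atTop (𝓝 (8/(15 * Real.sqrt π))) := by
    have := (tendsto_natCast_div_add_atTop (7/2 : ℝ)).div
      (Real.GammaSeq_tendsto_Gamma (7/2)) hΓ
    have h18 : (1:ℝ) / Real.Gamma (7/2) = 8/(15 * Real.sqrt π) := by
      rw [gamma_seven_halves]; field_simp
    rwa [h18] at this
  refine Tendsto.congr' ?_ hlim
  filter_upwards [eventually_ge_atTop 1] with n hn
  have hn0 : (0:ℝ) < n := by exact_mod_cast hn
  have hP : (0:ℝ) < ∏ i ∈ Finset.range n, ((i:ℝ) + 7/2) :=
    Finset.prod_pos fun i _ => by positivity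
  have hfac : (0:ℝ) < n.factorial := by exact_mod_cast n.factorial_pos
  have hrp : (0:ℝ) < (n:ℝ) ^ ((5:ℝ)/2) := Real.rpow_pos_of_pos hn0 _
  have hG : Real.GammaSeq (7/2) n
      = (n:ℝ) ^ ((5:ℝ)/2) * n * n.factorial
        / ((∏ i ∈ Finset.range n, ((i:ℝ) + 7/2)) * ((n:ℝ) + 7/2)) := by
    rw [Real.GammaSeq, Finset.prod_range_succ]
    have h75 : (n:ℝ) ^ ((7:ℝ)/2) = (n:ℝ) ^ ((5:ℝ)/2) * n := by
      rw [show (7:ℝ)/2 = 5/2 + 1 by norm_num, Real.rpow_add hn0, Real.rpow_one]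
    rw [h75, show (∏ x ∈ Finset.range n, ((7:ℝ)/2 + x))
        = ∏ x ∈ Finset.range n, ((x:ℝ) + 7/2) from Finset.prod_congr rfl fun i _ => by ring]
    ring
  rw [hG]
  field_simp

lemma tendsto_small (r : ℝ) (hr : |r| ≤ 3) :
    Tendsto (fun n : ℕ => (∏ i ∈ Finset.range n, ((i:ℝ) - r))
      / ((n:ℝ) ^ ((5:ℝ)/2) * n.factorial)) atTop (𝓝 0) := by
  have hB : Tendsto (fun n : ℕ => 2 * (n:ℝ) ^ (-(1:ℝ)/2)) atTop (𝓝 0) := by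
    have h0 : Tendsto (fun n : ℕ => (n:ℝ) ^ (-(1:ℝ)/2)) atTop (𝓝 0) := by
      have := (tendsto_rpow_neg_atTop (y := (1:ℝ)/2) (by norm_num)).comp
        tendsto_natCast_atTop_atTop
      simpa [Function.comp_def, neg_div] using this
    simpa using h0.const_mul 2
  refine squeeze_zero_norm' ?_ hB
  filter_upwards [eventually_ge_atTop 2] with n hn
  have hn0 : (0:ℝ) < n := by positivity
  have hn2 : (2:ℝ) ≤ n := by exact_mod_cast hn
  have hfac : (0:ℝ) < n.factorial := by exact_mod_cast n.factorial_pos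
  have hrp : (0:ℝ) < (n:ℝ) ^ ((5:ℝ)/2) := Real.rpow_pos_of_pos hn0 _
  have hd : (0:ℝ) < (n:ℝ) ^ ((5:ℝ)/2) * n.factorial := by positivity
  rw [norm_div, Real.norm_of_nonneg hd.le, Real.norm_eq_abs, Finset.abs_prod]
  have hnum : (∏ i ∈ Finset.range n, |(i:ℝ) - r|) ≤ 2 * (n:ℝ)^2 * n.factorial := by
    calc (∏ i ∈ Finset.range n, |(i:ℝ) - r|)
        ≤ ∏ i ∈ Finset.range n, ((i:ℝ) + 3) := by
          refine Finset.prod_le_prod (fun i _ => abs_nonneg _) fun i _ => ?_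
          calc |(i:ℝ) - r| ≤ |(i:ℝ)| + |r| := abs_sub _ _
            _ ≤ (i:ℝ) + 3 := by
                rw [abs_of_nonneg (by positivity : (0:ℝ) ≤ (i:ℝ))]
                linarith
      _ = ((n+2).factorial : ℝ) / 2 := prod_add_three n
      _ = ((n:ℝ)+2) * ((n:ℝ)+1) * n.factorial / 2 := by
          rw [show n + 2 = (n+1) + 1 from rfl, Nat.factorial_succ, Nat.factorial_succ]
          push_cast; ring
      _ ≤ 2 * (n:ℝ)^2 * n.factorial := by
          have h4 : ((n:ℝ)+2) * ((n:ℝ)+1) ≤ 4 * (n:ℝ)^2 := by nlinarith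
          have h5 := mul_le_mul_of_nonneg_right h4 hfac.le
          nlinarith
  have hsplit : (n:ℝ) ^ ((5:ℝ)/2) = (n:ℝ)^2 * (n:ℝ) ^ ((1:ℝ)/2) := by
    rw [show (5:ℝ)/2 = (2:ℕ) + (1:ℝ)/2 by norm_num, Real.rpow_add hn0, Real.rpow_natCast]
  have hhalf : (0:ℝ) < (n:ℝ) ^ ((1:ℝ)/2) := Real.rpow_pos_of_pos hn0 _
  have hneg : (n:ℝ) ^ (-(1:ℝ)/2) = ((n:ℝ) ^ ((1:ℝ)/2))⁻¹ := by
    rw [show -(1:ℝ)/2 = -((1:ℝ)/2) by ring, Real.rpow_neg hn0.le]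
  calc (∏ i ∈ Finset.range n, |(i:ℝ) - r|) / ((n:ℝ) ^ ((5:ℝ)/2) * n.factorial)
      ≤ (2 * (n:ℝ)^2 * n.factorial) / ((n:ℝ) ^ ((5:ℝ)/2) * n.factorial) :=
        (div_le_div_iff_of_pos_right hd).mpr hnum
    _ = 2 * (n:ℝ) ^ (-(1:ℝ)/2) := by
        rw [hsplit, hneg]
        field_simp

theorem main :
    Asymptotics.IsEquivalent Filter.atTop
      (fun n : ℕ => iteratedDeriv n f15 0)
      (fun n : ℕ => (1 / (3 * Real.sqrt Real.pi)) * (n : ℝ) ^ ((5 : ℝ) / 2)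
        * (2 : ℝ) ^ ((n : ℝ) - 2) * (Nat.factorial n : ℝ)) := by
  have hsp : (0:ℝ) < Real.sqrt π := Real.sqrt_pos.mpr Real.pi_pos
  set b : ℕ → ℝ := fun n => (1 / (3 * Real.sqrt Real.pi)) * (n : ℝ) ^ ((5 : ℝ) / 2)
        * (2 : ℝ) ^ ((n : ℝ) - 2) * (Nat.factorial n : ℝ) with hbdef
  have hb2 : ∀ n : ℕ, b n = (1/(12 * Real.sqrt π)) * (2^n * ((n:ℝ) ^ ((5:ℝ)/2) * n.factorial)) := by
    intro n
    have h2 : (2:ℝ) ^ ((n:ℝ) - 2) = 2^n / 4 := by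
      rw [Real.rpow_sub (by norm_num : (0:ℝ) < 2), Real.rpow_natCast]
      norm_num
    rw [hbdef]
    simp only
    rw [h2]
    field_simp
    ring
  have hbpos : ∀ n : ℕ, 1 ≤ n → 0 < b n := by
    intro n hn
    have hn0 : (0:ℝ) < n := by exact_mod_cast hn
    rw [hb2]
    have : (0:ℝ) < (n:ℝ) ^ ((5:ℝ)/2) := Real.rpow_pos_of_pos hn0 _
    have hfac : (0:ℝ) < n.factorial := by exact_mod_cast n.factorial_pos
    positivity
  -- the normalized quotient
  set A : ℕ → ℕ → ℝ := fun k n =>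
    (∏ i ∈ Finset.range n, ((i:ℝ) - e k)) / ((n:ℝ) ^ ((5:ℝ)/2) * n.factorial) with hAdef
  have hstep : ∀ n : ℕ, 1 ≤ n →
      iteratedDeriv n f15 0 / b n
        = (12 * Real.sqrt π) * ∑ k ∈ Finset.range 8, c k * A k n := by
    intro n hn
    have hn0 : (0:ℝ) < n := by exact_mod_cast hn
    have hfac : (0:ℝ) < n.factorial := by exact_mod_cast n.factorial_pos
    have hrp : (0:ℝ) < (n:ℝ) ^ ((5:ℝ)/2) := Real.rpow_pos_of_pos hn0 _
    rw [iteratedDeriv_f15_zero, hb2, Finset.sum_div, Finset.mul_sum]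
    refine Finset.sum_congr rfl fun k _ => ?_
    rw [prod_eq_two_pow, hAdef]
    simp only
    have h2n : (0:ℝ) < 2^n := by positivity
    field_simp
  have hlim : Tendsto (fun n : ℕ => (12 * Real.sqrt π) * ∑ k ∈ Finset.range 8, c k * A k n)
      atTop (𝓝 1) := by
    have hterm : ∀ k ∈ Finset.range 8, Tendsto (fun n => c k * A k n) atTop
        (𝓝 (if k = 0 then c 0 * (8/(15 * Real.sqrt π)) else 0)) := by
      intro k hk
      rw [Finset.mem_range] at hk
      interval_cases k
      · rw [if_pos rfl]
        have h0 : Tendsto (fun n : ℕ => c 0 *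
            ((∏ i ∈ Finset.range n, ((i:ℝ) + 7/2)) / ((n:ℝ) ^ ((5:ℝ)/2) * n.factorial)))
            atTop (𝓝 (c 0 * (8/(15 * Real.sqrt π)))) := tendsto_main.const_mul (c 0)
        refine h0.congr fun n => ?_
        simp only [hAdef]
        congr 2
        exact Finset.prod_congr rfl fun i _ => by norm_num [e]
      · rw [if_neg (by norm_num)]
        simpa [hAdef] using (tendsto_small (e 1) (by norm_num [e, abs_le])).const_mul (c 1)
      · rw [if_neg (by norm_num)]
        simpa [hAdef] using (tendsto_small (e 2) (by norm_num [e, abs_le])).const_mul (c 2)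
      · rw [if_neg (by norm_num)]
        simpa [hAdef] using (tendsto_small (e 3) (by norm_num [e, abs_le])).const_mul (c 3)
      · rw [if_neg (by norm_num)]
        simpa [hAdef] using (tendsto_small (e 4) (by norm_num [e, abs_le])).const_mul (c 4)
      · rw [if_neg (by norm_num)]
        simpa [hAdef] using (tendsto_small (e 5) (by norm_num [e, abs_le])).const_mul (c 5)
      · rw [if_neg (by norm_num)]
        simpa [hAdef] using (tendsto_small (e 6) (by norm_num [e, abs_le])).const_mul (c 6)
      · rw [if_neg (by norm_num)]
        simpa [hAdef] using (tendsto_small (e 7) (by norm_num [e, abs_le])).const_mul (c 7)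
    have hsum := tendsto_finset_sum (Finset.range 8) hterm
    have hS : (∑ k ∈ Finset.range 8, (if k = 0 then c 0 * (8/(15 * Real.sqrt π)) else 0))
        = c 0 * (8/(15 * Real.sqrt π)) := by
      rw [Finset.sum_ite_eq' (Finset.range 8) 0]
      simp
    rw [hS] at hsum
    have := hsum.const_mul (12 * Real.sqrt π)
    have hone : (12 * Real.sqrt π) * (c 0 * (8/(15 * Real.sqrt π))) = 1 := by
      show (12 * Real.sqrt π) * ((5/32 : ℝ) * (8/(15 * Real.sqrt π))) = 1
      field_simp
      ring
    rwa [hone] at this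
  have hquot : Tendsto (fun n : ℕ => iteratedDeriv n f15 0 / b n) atTop (𝓝 1) := by
    refine Tendsto.congr' ?_ hlim
    filter_upwards [eventually_ge_atTop 1] with n hn
    exact (hstep n hn).symm
  exact Asymptotics.isEquivalent_of_tendsto_one hquot

end Stmt15

/-- The sequence `n ↦ f15⁽ⁿ⁾(0)` (the number of leaf-labeled simplex time-consistent galled
trees with `n` leaves and two galls) is asymptotically equivalent to
`n ↦ (1/(3√π))·n^{5/2}·2^{n−2}·n!` as `n → ∞`. -/
theorem stmt15 :
    Asymptotics.IsEquivalent Filter.atTop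
      (fun n : ℕ => iteratedDeriv n f15 0)
      (fun n : ℕ => (1 / (3 * Real.sqrt Real.pi)) * (n : ℝ) ^ ((5 : ℝ) / 2)
        * (2 : ℝ) ^ ((n : ℝ) - 2) * (Nat.factorial n : ℝ)) :=
  Stmt15.main
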